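/- Let c, p : [0,∞) → ℝ be differentiable and satisfy c' = k1(e0 − c)(s0 − c − p) − k1·K_M·c and p' = k2·c with c(0) = 0, p(0) = 0, where k1, k−1, k2, e0, s0 > 0 and K_M = (k−1+k2)/k1. Assume 0 ≤ c(t) ≤ λ, 0 ≤ p(t), and c(t) + p(t) ≤ s0 for all t ≥ 0, where λ = ½(e0+K_M+s0) − ½√((e0+K_M+s0)² − 4e0·s0), and let h⁻(p) = ½(e0+K_M+s0−p) − ½√((e0+K_M+s0−p)² − 4e0(s0−p)). Then limsup_{t→∞} (c(t) − h⁻(p(t)))² ≤ λ²·ε_LT², where ε_LT = (η/(1+η))·(1/(1+κ))·(2K_M/(K_M + √(K_M² + 4e0·K_M))), η = e0/K_M, κ = k−1/k2. -/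

import Mathlib

lemma tq_P (e0 KM S y : ℝ) (he0 : 0 < e0) (hKM : 0 < KM) (hS0 : 0 ≤ S)
    (hS2 : S ^ 2 = KM ^ 2 + 4 * e0 * KM) (hy : KM ≤ y) :
    (e0 + KM) * (KM + S) * y ≤ 2 * (y + e0) * (y ^ 2 + e0 * KM) := by
  have hQ : 0 ≤ (y - KM) * (2 * y ^ 2 + (3 * (e0 + KM) / 2) * y + KM * (5 * e0 + KM) / 2) := by
    have h1 : 0 ≤ y - KM := by linarith
    have h2 : 0 ≤ 2 * y ^ 2 + (3 * (e0 + KM) / 2) * y + KM * (5 * e0 + KM) / 2 := by nlinarith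
    exact mul_nonneg h1 h2
  have hsq : 0 ≤ (e0 + KM) * (S - y) ^ 2 := by positivity
  have heq : 2 * (y + e0) * (y ^ 2 + e0 * KM) - (e0 + KM) * (KM + S) * y
      = (y - KM) * (2 * y ^ 2 + (3 * (e0 + KM) / 2) * y + KM * (5 * e0 + KM) / 2)
        + (e0 + KM) * (S - y) ^ 2 / 2 := by
    linear_combination (-(e0 + KM) / 2) * hS2
  linarith [hQ, hsq]

/-- D1 inequality: `(e0+KM)*(KM+S) ≤ 2*D*hp`. -/
lemma tq_D1 (e0 KM q D S : ℝ) (he0 : 0 < e0) (hKM : 0 < KM) (hq : 0 ≤ q)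
    (hS0 : 0 ≤ S) (hS2 : S ^ 2 = KM ^ 2 + 4 * e0 * KM)
    (hD0 : 0 ≤ D) (hD2 : D ^ 2 = (q + KM - e0) ^ 2 + 4 * e0 * KM) :
    (e0 + KM) * (KM + S) ≤ 2 * D * ((e0 + KM + q + D) / 2) := by
  have hpge : e0 + KM ≤ (e0 + KM + q + D) / 2 := by
    rcases le_or_gt (e0 + KM - q) 0 with h | h
    · nlinarith
    · nlinarith [sq_nonneg (D - (e0 + KM - q))]
  have hyKM : KM ≤ (e0 + KM + q + D) / 2 - e0 := by linarith
  have hypos : 0 < (e0 + KM + q + D) / 2 - e0 := lt_of_lt_of_le hKM hyKM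
  have hid : D * ((e0 + KM + q + D) / 2 - e0) = ((e0 + KM + q + D) / 2 - e0) ^ 2 + e0 * KM := by
    nlinarith [hD2]
  have hP := tq_P e0 KM S ((e0 + KM + q + D) / 2 - e0) he0 hKM hS0 hS2 hyKM
  have hmain : (e0 + KM) * (KM + S) * ((e0 + KM + q + D) / 2 - e0)
      ≤ 2 * D * ((e0 + KM + q + D) / 2) * ((e0 + KM + q + D) / 2 - e0) := by
    nlinarith [hP, hid]
  exact le_of_mul_le_mul_right hmain hypos

/-- Positivity of D. -/
lemma tq_Dpos (e0 KM q D : ℝ) (he0 : 0 < e0) (hKM : 0 < KM)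
    (hD0 : 0 ≤ D) (hD2 : D ^ 2 = (q + KM - e0) ^ 2 + 4 * e0 * KM) : 0 < D := by
  nlinarith [sq_nonneg (q + KM - e0)]

/-- hm ≤ e0. -/
lemma tq_hm_le (e0 KM q D : ℝ) (he0 : 0 < e0) (hKM : 0 < KM)
    (hD0 : 0 ≤ D) (hD2 : D ^ 2 = (q + KM - e0) ^ 2 + 4 * e0 * KM) :
    (e0 + KM + q) / 2 - D / 2 ≤ e0 := by
  rcases le_or_gt (q + KM - e0) 0 with h | h
  · linarith
  · nlinarith [sq_nonneg (D - (q + KM - e0))]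

/-- hp ≥ e0 + KM. -/
lemma tq_hp_ge (e0 KM q D : ℝ) (he0 : 0 < e0) (hKM : 0 < KM) (hq : 0 ≤ q)
    (hD0 : 0 ≤ D) (hD2 : D ^ 2 = (q + KM - e0) ^ 2 + 4 * e0 * KM) :
    e0 + KM ≤ (e0 + KM + q) / 2 + D / 2 := by
  rcases le_or_gt (e0 + KM - q) 0 with h | h
  · linarith
  · nlinarith [sq_nonneg (D - (e0 + KM - q))]

/-- q ≤ hp. -/
lemma tq_hp_ge_q (e0 KM q D : ℝ) (he0 : 0 < e0) (hKM : 0 < KM) (hq : 0 ≤ q)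
    (hD0 : 0 ≤ D) (hD2 : D ^ 2 = (q + KM - e0) ^ 2 + 4 * e0 * KM) :
    q ≤ (e0 + KM + q) / 2 + D / 2 := by
  rcases le_or_gt (q - KM - e0) 0 with h | h
  · linarith
  · nlinarith [sq_nonneg (D - (q - KM - e0))]

/-- The key algebraic inequality. -/
lemma tq_key (e0 KM lam S q D c : ℝ) (he0 : 0 < e0) (hKM : 0 < KM)
    (hS0 : 0 ≤ S) (hS2 : S ^ 2 = KM ^ 2 + 4 * e0 * KM)
    (hD0 : 0 ≤ D) (hD2 : D ^ 2 = (q + KM - e0) ^ 2 + 4 * e0 * KM)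
    (hq : 0 ≤ q) (hlam0 : 0 ≤ lam)
    (hc0 : 0 ≤ c) (hcl : c ≤ lam) (hcq : c ≤ q) :
    c * (e0 - ((e0 + KM + q) / 2 - D / 2)) * ((e0 + KM) * (KM + S))
      ≤ 2 * lam * e0 * (D * ((e0 + KM + q) / 2 + D / 2 - c)) := by
  have hDpos := tq_Dpos e0 KM q D he0 hKM hD0 hD2
  have hmle := tq_hm_le e0 KM q D he0 hKM hD0 hD2
  have hpge := tq_hp_ge e0 KM q D he0 hKM hq hD0 hD2
  have hpgeq := tq_hp_ge_q e0 KM q D he0 hKM hq hD0 hD2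
  have hppos : 0 < (e0 + KM + q) / 2 + D / 2 := by linarith
  have hprod : ((e0 + KM + q) / 2 - D / 2) * ((e0 + KM + q) / 2 + D / 2) = e0 * q := by
    linear_combination (-(1 : ℝ) / 4) * hD2
  have e0hm : (e0 - ((e0 + KM + q) / 2 - D / 2)) * ((e0 + KM + q) / 2 + D / 2)
      = e0 * (((e0 + KM + q) / 2 + D / 2) - q) := by
    linear_combination (-1 : ℝ) * hprod
  have hD1 : (e0 + KM) * (KM + S) ≤ 2 * D * ((e0 + KM + q) / 2 + D / 2) := by
    have := tq_D1 e0 KM q D S he0 hKM hq hS0 hS2 hD0 hD2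
    have heq : (e0 + KM + q + D) / 2 = (e0 + KM + q) / 2 + D / 2 := by ring
    rwa [heq] at this
  have hq1 : 0 ≤ ((e0 + KM + q) / 2 + D / 2) - q := by linarith
  have hc1 : ((e0 + KM + q) / 2 + D / 2) - q ≤ ((e0 + KM + q) / 2 + D / 2) - c := by linarith
  have hG : c * e0 * (((e0 + KM + q) / 2 + D / 2) - q) * ((e0 + KM) * (KM + S))
      ≤ lam * e0 * (((e0 + KM + q) / 2 + D / 2) - c) * (2 * D * ((e0 + KM + q) / 2 + D / 2)) := by
    calc c * e0 * (((e0 + KM + q) / 2 + D / 2) - q) * ((e0 + KM) * (KM + S))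
        ≤ lam * e0 * (((e0 + KM + q) / 2 + D / 2) - q) * ((e0 + KM) * (KM + S)) := by gcongr
      _ ≤ lam * e0 * (((e0 + KM + q) / 2 + D / 2) - q) * (2 * D * ((e0 + KM + q) / 2 + D / 2)) := by
          gcongr <;> positivity
      _ ≤ lam * e0 * (((e0 + KM + q) / 2 + D / 2) - c) * (2 * D * ((e0 + KM + q) / 2 + D / 2)) := by
          gcongr <;> positivity
  have hL : c * (e0 - ((e0 + KM + q) / 2 - D / 2)) * ((e0 + KM) * (KM + S))
        * ((e0 + KM + q) / 2 + D / 2)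
      = c * e0 * (((e0 + KM + q) / 2 + D / 2) - q) * ((e0 + KM) * (KM + S)) := by
    linear_combination (c * ((e0 + KM) * (KM + S))) * e0hm
  have hfin : c * (e0 - ((e0 + KM + q) / 2 - D / 2)) * ((e0 + KM) * (KM + S))
        * ((e0 + KM + q) / 2 + D / 2)
      ≤ 2 * lam * e0 * (D * ((e0 + KM + q) / 2 + D / 2 - c)) * ((e0 + KM + q) / 2 + D / 2) := by
    rw [hL]
    calc c * e0 * (((e0 + KM + q) / 2 + D / 2) - q) * ((e0 + KM) * (KM + S))
        ≤ lam * e0 * (((e0 + KM + q) / 2 + D / 2) - c) * (2 * D * ((e0 + KM + q) / 2 + D / 2)) := hG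
      _ = 2 * lam * e0 * (D * ((e0 + KM + q) / 2 + D / 2 - c)) * ((e0 + KM + q) / 2 + D / 2) := by
          ring
  exact le_of_mul_le_mul_right hfin hppos

/-- Facts about lambda. -/
lemma tq_lam (e0 KM s0 : ℝ) (he0 : 0 < e0) (hKM : 0 < KM) (hs0 : 0 < s0) :
    0 < (e0 + KM + s0) / 2 - Real.sqrt ((e0 + KM + s0) ^ 2 - 4 * e0 * s0) / 2 ∧
    (e0 + KM + s0) / 2 - Real.sqrt ((e0 + KM + s0) ^ 2 - 4 * e0 * s0) / 2 ≤ e0 := by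
  have harg : (0 : ℝ) ≤ (e0 + KM + s0) ^ 2 - 4 * e0 * s0 := by nlinarith [sq_nonneg (e0 + KM - s0)]
  have hR0 : 0 ≤ Real.sqrt ((e0 + KM + s0) ^ 2 - 4 * e0 * s0) := Real.sqrt_nonneg _
  have hR2 : (Real.sqrt ((e0 + KM + s0) ^ 2 - 4 * e0 * s0)) ^ 2
      = (e0 + KM + s0) ^ 2 - 4 * e0 * s0 := Real.sq_sqrt harg
  constructor
  · nlinarith [hR2, hR0]
  · rcases le_or_gt (e0 + KM + s0 - 2 * e0) 0 with h | h
    · linarith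
    · nlinarith [hR2, hR0]

/-- Barrier lemma: if the derivative is nonpositive whenever `u ≥ B`, and `u t0 ≤ B`,
then `u` stays `≤ B`. -/
lemma tq_barrier (u du : ℝ → ℝ) (t0 B : ℝ)
    (hd : ∀ t, t0 ≤ t → HasDerivAt u (du t) t)
    (h0 : u t0 ≤ B)
    (hneg : ∀ t, t0 ≤ t → B ≤ u t → du t ≤ 0) :
    ∀ t, t0 ≤ t → u t ≤ B := by
  intro t1 ht1
  by_contra hgt
  push_neg at hgt
  have hcont : ContinuousOn u (Set.Icc t0 t1) := fun t ht =>
    ((hd t ht.1).continuousAt).continuousWithinAt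
  have hAeq : {t | t ∈ Set.Icc t0 t1 ∧ u t ≤ B} = Set.Icc t0 t1 ∩ u ⁻¹' Set.Iic B := rfl
  have hclosed : IsClosed {t | t ∈ Set.Icc t0 t1 ∧ u t ≤ B} := by
    rw [hAeq]
    exact hcont.preimage_isClosed_of_isClosed isClosed_Icc isClosed_Iic
  have hne : Set.Nonempty {t | t ∈ Set.Icc t0 t1 ∧ u t ≤ B} := ⟨t0, ⟨le_refl _, ht1⟩, h0⟩
  have hbdd : BddAbove {t | t ∈ Set.Icc t0 t1 ∧ u t ≤ B} := ⟨t1, fun x hx => hx.1.2⟩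
  have ht2A : sSup {t | t ∈ Set.Icc t0 t1 ∧ u t ≤ B} ∈ {t | t ∈ Set.Icc t0 t1 ∧ u t ≤ B} :=
    hclosed.csSup_mem hne hbdd
  set t2 := sSup {t | t ∈ Set.Icc t0 t1 ∧ u t ≤ B} with ht2def
  have ht2 : t0 ≤ t2 := ht2A.1.1
  have ht2le : t2 ≤ t1 := ht2A.1.2
  have hut2 : u t2 ≤ B := ht2A.2
  have ht2lt : t2 < t1 := lt_of_le_of_ne ht2le (fun h => by rw [h] at hut2; linarith)
  have hmid : ∀ s, s ∈ Set.Ioc t2 t1 → B ≤ u s := by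
    intro s hs
    by_contra hus
    push_neg at hus
    have hsA : s ∈ {t | t ∈ Set.Icc t0 t1 ∧ u t ≤ B} :=
      ⟨⟨le_trans ht2 hs.1.le, hs.2⟩, hus.le⟩
    have := le_csSup hbdd hsA
    linarith [hs.1]
  have hanti : AntitoneOn u (Set.Icc t2 t1) := by
    apply antitoneOn_of_deriv_nonpos (convex_Icc t2 t1)
    · exact hcont.mono (Set.Icc_subset_Icc_left ht2)
    · intro x hx
      rw [interior_Icc] at hx
      exact ((hd x (le_trans ht2 hx.1.le)).differentiableAt).differentiableWithinAt
    · intro x hx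
      rw [interior_Icc] at hx
      have hx0 : t0 ≤ x := le_trans ht2 hx.1.le
      rw [(hd x hx0).deriv]
      exact hneg x hx0 (hmid x ⟨hx.1, hx.2.le⟩)
  have := hanti (Set.left_mem_Icc.2 ht2le) (Set.right_mem_Icc.2 ht2le) ht2le
  linarith

/-- Growth lemma: if `du ≥ m` on `[0, T]` then `u T ≥ u 0 + m T`. -/
lemma tq_growth (u du : ℝ → ℝ) (m T : ℝ) (hT : 0 ≤ T)
    (hd : ∀ t, 0 ≤ t → HasDerivAt u (du t) t)
    (hm : ∀ t, 0 ≤ t → t ≤ T → m ≤ du t) :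
    u 0 + m * T ≤ u T := by
  have hder : ∀ x, 0 ≤ x → HasDerivAt (fun t => u t - m * t) (du x - m) x := by
    intro x hx
    exact (hd x hx).sub (by simpa using (hasDerivAt_id x).const_mul m)
  have h : MonotoneOn (fun t => u t - m * t) (Set.Icc 0 T) := by
    apply monotoneOn_of_deriv_nonneg (convex_Icc 0 T)
    · exact fun t ht => ((hder t ht.1).continuousAt).continuousWithinAt
    · intro x hx
      rw [interior_Icc] at hx
      exact ((hder x hx.1.le).differentiableAt).differentiableWithinAt
    · intro x hx
      rw [interior_Icc] at hx
      rw [(hder x hx.1.le).deriv]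
      linarith [hm x hx.1.le hx.2.le]
  have := h (Set.left_mem_Icc.2 hT) (Set.right_mem_Icc.2 hT) hT
  simp only at this
  linarith

/-- At points where `u ≥ B`, the derivative of u is nonpositive. -/
lemma tq_up (k1 k2 e0 KM s0 lam S B P ct D : ℝ)
    (hk1 : 0 < k1) (hk2 : 0 < k2) (he0 : 0 < e0) (hKM : 0 < KM)
    (hS0 : 0 ≤ S) (hS2 : S ^ 2 = KM ^ 2 + 4 * e0 * KM)
    (hD0 : 0 ≤ D) (hD2 : D ^ 2 = ((s0 - P) + KM - e0) ^ 2 + 4 * e0 * KM)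
    (hlam0 : 0 < lam) (hlame : lam ≤ e0)
    (hct0 : 0 ≤ ct) (hctlam : ct ≤ lam) (hctq : ct + P ≤ s0)
    (hBpos : 0 < B)
    (hBk : k1 * B * ((e0 + KM) * (KM + S)) = 2 * lam * e0 * k2)
    (hBu : B ≤ ct - ((e0 + KM + s0 - P) / 2 - D / 2)) :
    (k1 * (e0 - ct) * (s0 - ct - P) - k1 * KM * ct)
      + (e0 - ((e0 + KM + s0 - P) / 2 - D / 2)) / D * (k2 * ct) ≤ 0 := by
  have hq0 : 0 ≤ s0 - P := by linarith
  have hctq' : ct ≤ s0 - P := by linarith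
  have hkey := tq_key e0 KM lam S (s0 - P) D ct he0 hKM hS0 hS2 hD0 hD2 hq0 hlam0.le
    hct0 hctlam hctq'
  have hDpos := tq_Dpos e0 KM (s0 - P) D he0 hKM hD0 hD2
  have hmle := tq_hm_le e0 KM (s0 - P) D he0 hKM hD0 hD2
  have hpge := tq_hp_ge e0 KM (s0 - P) D he0 hKM hq0 hD0 hD2
  have hpos2 : 0 < (e0 + KM) * (KM + S) := by positivity
  have term2 : (e0 - ((e0 + KM + s0 - P) / 2 - D / 2)) / D * (k2 * ct)
      ≤ k1 * B * ((e0 + KM + (s0 - P)) / 2 + D / 2 - ct) := by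
    rw [div_mul_eq_mul_div, div_le_iff₀ hDpos]
    apply le_of_mul_le_mul_right _ hpos2
    have h9 := mul_le_mul_of_nonneg_left hkey hk2.le
    have h8 : k2 * (2 * lam * e0 * (D * ((e0 + KM + (s0 - P)) / 2 + D / 2 - ct)))
        = k1 * B * ((e0 + KM + (s0 - P)) / 2 + D / 2 - ct) * D * ((e0 + KM) * (KM + S)) := by
      linear_combination (-(D * ((e0 + KM + (s0 - P)) / 2 + D / 2 - ct))) * hBk
    calc (e0 - ((e0 + KM + s0 - P) / 2 - D / 2)) * (k2 * ct) * ((e0 + KM) * (KM + S))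
        = k2 * (ct * (e0 - ((e0 + KM + (s0 - P)) / 2 - D / 2)) * ((e0 + KM) * (KM + S))) := by
          ring
      _ ≤ k2 * (2 * lam * e0 * (D * ((e0 + KM + (s0 - P)) / 2 + D / 2 - ct))) := h9
      _ = k1 * B * ((e0 + KM + (s0 - P)) / 2 + D / 2 - ct) * D * ((e0 + KM) * (KM + S)) := h8
  have hfact : k1 * (e0 - ct) * (s0 - ct - P) - k1 * KM * ct
      = k1 * ((ct - ((e0 + KM + (s0 - P)) / 2 - D / 2))
        * (ct - ((e0 + KM + (s0 - P)) / 2 + D / 2))) := by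
    linear_combination (k1 / 4) * hD2
  have hBu' : B ≤ ct - ((e0 + KM + (s0 - P)) / 2 - D / 2) := by linarith [hBu]
  have hhic : ct ≤ (e0 + KM + (s0 - P)) / 2 + D / 2 := by linarith
  have term1 : k1 * (e0 - ct) * (s0 - ct - P) - k1 * KM * ct
      ≤ k1 * B * (ct - ((e0 + KM + (s0 - P)) / 2 + D / 2)) := by
    rw [hfact]
    nlinarith [mul_nonneg (sub_nonneg.2 hBu') (sub_nonneg.2 hhic), hk1.le,
      mul_nonneg hk1.le (mul_nonneg (sub_nonneg.2 hBu') (sub_nonneg.2 hhic))]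
  linarith [term1, term2]

/-- At points where `u ≤ -B`, the derivative of u is at least `k1*B*KM`. -/
lemma tq_down (k1 k2 e0 KM s0 lam S B P ct D : ℝ)
    (hk1 : 0 < k1) (hk2 : 0 < k2) (he0 : 0 < e0) (hKM : 0 < KM)
    (hS0 : 0 ≤ S) (hS2 : S ^ 2 = KM ^ 2 + 4 * e0 * KM)
    (hD0 : 0 ≤ D) (hD2 : D ^ 2 = ((s0 - P) + KM - e0) ^ 2 + 4 * e0 * KM)
    (hlam0 : 0 < lam) (hlame : lam ≤ e0)
    (hct0 : 0 ≤ ct) (hctlam : ct ≤ lam) (hctq : ct + P ≤ s0)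
    (hBpos : 0 < B)
    (hBu : ct - ((e0 + KM + s0 - P) / 2 - D / 2) ≤ -B) :
    k1 * B * KM ≤ (k1 * (e0 - ct) * (s0 - ct - P) - k1 * KM * ct)
      + (e0 - ((e0 + KM + s0 - P) / 2 - D / 2)) / D * (k2 * ct) := by
  have hq0 : 0 ≤ s0 - P := by linarith
  have hDpos := tq_Dpos e0 KM (s0 - P) D he0 hKM hD0 hD2
  have hmle := tq_hm_le e0 KM (s0 - P) D he0 hKM hD0 hD2
  have hpge := tq_hp_ge e0 KM (s0 - P) D he0 hKM hq0 hD0 hD2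
  have term2 : 0 ≤ (e0 - ((e0 + KM + s0 - P) / 2 - D / 2)) / D * (k2 * ct) := by
    apply mul_nonneg (div_nonneg (by linarith) hDpos.le) (by positivity)
  have hfact : k1 * (e0 - ct) * (s0 - ct - P) - k1 * KM * ct
      = k1 * ((ct - ((e0 + KM + (s0 - P)) / 2 - D / 2))
        * (ct - ((e0 + KM + (s0 - P)) / 2 + D / 2))) := by
    linear_combination (k1 / 4) * hD2
  have hBu' : B ≤ ((e0 + KM + (s0 - P)) / 2 - D / 2) - ct := by linarith [hBu]
  have hhic : KM ≤ ((e0 + KM + (s0 - P)) / 2 + D / 2) - ct := by linarith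
  have term1 : k1 * B * KM ≤ k1 * (e0 - ct) * (s0 - ct - P) - k1 * KM * ct := by
    rw [hfact]
    nlinarith [mul_nonneg (sub_nonneg.2 hBu') (by linarith : (0:ℝ) ≤ ((e0 + KM + (s0 - P)) / 2 + D / 2) - ct),
      mul_nonneg hBpos.le (by linarith : (0:ℝ) ≤ (((e0 + KM + (s0 - P)) / 2 + D / 2) - ct) - KM), hk1.le]
  linarith [term1, term2]

/-- tightened long-time (limsup) bound for the total QSSA error, with the
small parameter ε_LT that vanishes as K_M → 0. -/
theorem tQSSA_limsup_bound (k1 km1 k2 e0 s0 KM lam η κ εLT : ℝ)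
    (hk1 : 0 < k1) (hkm1 : 0 < km1) (hk2 : 0 < k2) (he0 : 0 < e0) (hs0 : 0 < s0)
    (hKM : KM = (km1 + k2) / k1)
    (hlam : lam = (e0 + KM + s0) / 2 - Real.sqrt ((e0 + KM + s0) ^ 2 - 4 * e0 * s0) / 2)
    (hη : η = e0 / KM) (hκ : κ = km1 / k2)
    (hεLT : εLT = (η / (1 + η)) * (1 / (1 + κ))
      * (2 * KM / (KM + Real.sqrt (KM ^ 2 + 4 * e0 * KM))))
    (c p : ℝ → ℝ)
    (hc : ∀ t : ℝ, 0 ≤ t →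
      HasDerivAt c (k1 * (e0 - c t) * (s0 - c t - p t) - k1 * KM * c t) t)
    (hp : ∀ t : ℝ, 0 ≤ t → HasDerivAt p (k2 * c t) t)
    (hc0 : c 0 = 0) (hp0 : p 0 = 0)
    (hcb : ∀ t : ℝ, 0 ≤ t → 0 ≤ c t ∧ c t ≤ lam)
    (hpb : ∀ t : ℝ, 0 ≤ t → 0 ≤ p t ∧ c t + p t ≤ s0) :
    Filter.limsup
      (fun t : ℝ =>
        (c t - ((e0 + KM + s0 - p t) / 2
          - Real.sqrt ((e0 + KM + s0 - p t) ^ 2 - 4 * e0 * (s0 - p t)) / 2)) ^ 2)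
      Filter.atTop ≤ lam ^ 2 * εLT ^ 2 := by
  have hKMpos : 0 < KM := by rw [hKM]; positivity
  have hS0 : (0:ℝ) ≤ Real.sqrt (KM ^ 2 + 4 * e0 * KM) := Real.sqrt_nonneg _
  have hS2 : (Real.sqrt (KM ^ 2 + 4 * e0 * KM)) ^ 2 = KM ^ 2 + 4 * e0 * KM :=
    Real.sq_sqrt (by positivity)
  have hlamF := tq_lam e0 KM s0 he0 hKMpos hs0
  have hlampos : 0 < lam := by rw [hlam]; exact hlamF.1
  have hlame : lam ≤ e0 := by rw [hlam]; exact hlamF.2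
  have hKSpos : 0 < KM + Real.sqrt (KM ^ 2 + 4 * e0 * KM) := by positivity
  have hk1KM : k1 * KM = km1 + k2 := by rw [hKM]; field_simp
  have hεeq : εLT * (k1 * ((e0 + KM) * (KM + Real.sqrt (KM ^ 2 + 4 * e0 * KM)))) =
      2 * e0 * k2 := by
    rw [hεLT, hη, hκ]
    have h1 : (1 : ℝ) + e0 / KM = (KM + e0) / KM := by field_simp
    have h2 : (1 : ℝ) + km1 / k2 = (km1 + k2) / k2 := by field_simp; ring
    rw [h1, h2]
    field_simp
    linear_combination (e0 + KM) * hk1KM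
  have hεpos : 0 < εLT := by
    have h2 : 0 < k1 * ((e0 + KM) * (KM + Real.sqrt (KM ^ 2 + 4 * e0 * KM))) := by positivity
    nlinarith [hεeq, mul_pos (mul_pos (by norm_num : (0:ℝ) < 2) he0) hk2]
  have hBpos : 0 < lam * εLT := mul_pos hlampos hεpos
  have hBk : k1 * (lam * εLT) * ((e0 + KM) * (KM + Real.sqrt (KM ^ 2 + 4 * e0 * KM)))
      = 2 * lam * e0 * k2 := by linear_combination lam * hεeq
  -- derivative of u
  set u : ℝ → ℝ := fun t => c t - ((e0 + KM + s0 - p t) / 2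
      - Real.sqrt ((e0 + KM + s0 - p t) ^ 2 - 4 * e0 * (s0 - p t)) / 2) with hudef
  set du : ℝ → ℝ := fun t => (k1 * (e0 - c t) * (s0 - c t - p t) - k1 * KM * c t)
      + (e0 - ((e0 + KM + s0 - p t) / 2
          - Real.sqrt ((e0 + KM + s0 - p t) ^ 2 - 4 * e0 * (s0 - p t)) / 2))
        / Real.sqrt ((e0 + KM + s0 - p t) ^ 2 - 4 * e0 * (s0 - p t)) * (k2 * c t) with hdudef
  -- basic per-time facts
  have hargpos : ∀ t : ℝ, 0 < (e0 + KM + s0 - p t) ^ 2 - 4 * e0 * (s0 - p t) := by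
    intro t
    nlinarith [sq_nonneg ((s0 - p t) + KM - e0)]
  have hDpos : ∀ t : ℝ, 0 < Real.sqrt ((e0 + KM + s0 - p t) ^ 2 - 4 * e0 * (s0 - p t)) :=
    fun t => Real.sqrt_pos.2 (hargpos t)
  have hD2 : ∀ t : ℝ, (Real.sqrt ((e0 + KM + s0 - p t) ^ 2 - 4 * e0 * (s0 - p t))) ^ 2
      = ((s0 - p t) + KM - e0) ^ 2 + 4 * e0 * KM := by
    intro t
    rw [Real.sq_sqrt (hargpos t).le]
    ring
  have hud : ∀ t : ℝ, 0 ≤ t → HasDerivAt u (du t) t := by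
    intro t ht
    have h1 : HasDerivAt (fun s => e0 + KM + s0 - p s) (-(k2 * c t)) t :=
      (hp t ht).const_sub (e0 + KM + s0)
    have h2 : HasDerivAt (fun s => (e0 + KM + s0 - p s) ^ 2)
        (2 * (e0 + KM + s0 - p t) ^ 1 * (-(k2 * c t))) t := h1.pow 2
    have h3 : HasDerivAt (fun s => 4 * e0 * (s0 - p s)) (4 * e0 * (-(k2 * c t))) t :=
      ((hp t ht).const_sub s0).const_mul (4 * e0)
    have h4 : HasDerivAt (fun s => (e0 + KM + s0 - p s) ^ 2 - 4 * e0 * (s0 - p s))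
        (2 * (e0 + KM + s0 - p t) ^ 1 * (-(k2 * c t)) - 4 * e0 * (-(k2 * c t))) t := h2.sub h3
    have h5 : HasDerivAt (fun s => Real.sqrt ((e0 + KM + s0 - p s) ^ 2 - 4 * e0 * (s0 - p s)))
        ((2 * (e0 + KM + s0 - p t) ^ 1 * (-(k2 * c t)) - 4 * e0 * (-(k2 * c t)))
          / (2 * Real.sqrt ((e0 + KM + s0 - p t) ^ 2 - 4 * e0 * (s0 - p t)))) t :=
      h4.sqrt (ne_of_gt (hargpos t))
    have h6 : HasDerivAt u
        ((k1 * (e0 - c t) * (s0 - c t - p t) - k1 * KM * c t)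
          - ((-(k2 * c t)) / 2
            - (2 * (e0 + KM + s0 - p t) ^ 1 * (-(k2 * c t)) - 4 * e0 * (-(k2 * c t)))
              / (2 * Real.sqrt ((e0 + KM + s0 - p t) ^ 2 - 4 * e0 * (s0 - p t))) / 2)) t :=
      (hc t ht).sub ((h1.div_const 2).sub (h5.div_const 2))
    convert h6 using 1
    rw [hdudef]
    have hDne : Real.sqrt ((e0 + KM + s0 - p t) ^ 2 - 4 * e0 * (s0 - p t)) ≠ 0 :=
      ne_of_gt (hDpos t)
    beta_reduce
    generalize Real.sqrt ((e0 + KM + s0 - p t) ^ 2 - 4 * e0 * (s0 - p t)) = D at hDne ⊢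
    field_simp
    ring
  -- upper bound on derivative when u ≥ B
  have hup : ∀ t : ℝ, 0 ≤ t → lam * εLT ≤ u t → du t ≤ 0 := by
    intro t ht hBu
    rw [hdudef]
    exact tq_up k1 k2 e0 KM s0 lam (Real.sqrt (KM ^ 2 + 4 * e0 * KM)) (lam * εLT) (p t) (c t)
      (Real.sqrt ((e0 + KM + s0 - p t) ^ 2 - 4 * e0 * (s0 - p t)))
      hk1 hk2 he0 hKMpos hS0 hS2 (hDpos t).le (hD2 t) hlampos hlame
      (hcb t ht).1 (hcb t ht).2 (hpb t ht).2 hBpos hBk hBu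
  -- lower bound on derivative when u ≤ -B
  have hdown : ∀ t : ℝ, 0 ≤ t → u t ≤ -(lam * εLT) → k1 * (lam * εLT) * KM ≤ du t := by
    intro t ht hBu
    rw [hdudef]
    exact tq_down k1 k2 e0 KM s0 lam (Real.sqrt (KM ^ 2 + 4 * e0 * KM)) (lam * εLT) (p t) (c t)
      (Real.sqrt ((e0 + KM + s0 - p t) ^ 2 - 4 * e0 * (s0 - p t)))
      hk1 hk2 he0 hKMpos hS0 hS2 (hDpos t).le (hD2 t) hlampos hlame
      (hcb t ht).1 (hcb t ht).2 (hpb t ht).2 hBpos hBu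
  -- initial value
  have hu0 : u 0 = -lam := by
    rw [hudef]
    simp only [hc0, hp0, hlam]
    norm_num
  -- upper barrier
  have hub : ∀ t : ℝ, 0 ≤ t → u t ≤ lam * εLT :=
    tq_barrier u du 0 (lam * εLT) hud (by rw [hu0]; linarith) hup
  -- lower bound, eventually
  have hm : 0 < k1 * (lam * εLT) * KM := by positivity
  have hex : ∃ t0 : ℝ, 0 ≤ t0 ∧ -(lam * εLT) ≤ u t0 := by
    by_contra hno
    push_neg at hno
    have hT : (0:ℝ) ≤ lam / (k1 * (lam * εLT) * KM) := by positivity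
    have hgr := tq_growth u du (k1 * (lam * εLT) * KM) (lam / (k1 * (lam * εLT) * KM)) hT hud
      (fun t ht _ => hdown t ht (hno t ht).le)
    rw [hu0] at hgr
    rw [mul_div_cancel₀ lam (ne_of_gt hm)] at hgr
    have := hno (lam / (k1 * (lam * εLT) * KM)) hT
    linarith
  obtain ⟨t0, ht0, hut0⟩ := hex
  have hlb : ∀ t : ℝ, t0 ≤ t → -(lam * εLT) ≤ u t := by
    have hbar := tq_barrier (fun s => -u s) (fun s => -du s) t0 (lam * εLT)
      (fun t ht => (hud t (le_trans ht0 ht)).neg)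
      (by show -u t0 ≤ lam * εLT; linarith)
      (fun t ht hB => by
        have hB' : lam * εLT ≤ -u t := hB
        have h := hdown t (le_trans ht0 ht) (by linarith)
        show -du t ≤ 0
        linarith)
    intro t ht
    have h2 : -u t ≤ lam * εLT := hbar t ht
    linarith
  -- conclude
  have hev : ∀ᶠ t in Filter.atTop, (fun t : ℝ =>
      (c t - ((e0 + KM + s0 - p t) / 2
        - Real.sqrt ((e0 + KM + s0 - p t) ^ 2 - 4 * e0 * (s0 - p t)) / 2)) ^ 2) t
      ≤ lam ^ 2 * εLT ^ 2 := by
    filter_upwards [Filter.eventually_ge_atTop t0, Filter.eventually_ge_atTop (0:ℝ)]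
      with t ht ht0'
    have h1 := hub t ht0'
    have h2 := hlb t ht
    have h3 : (u t) ^ 2 ≤ (lam * εLT) ^ 2 := sq_le_sq' h2 h1
    calc (c t - ((e0 + KM + s0 - p t) / 2
        - Real.sqrt ((e0 + KM + s0 - p t) ^ 2 - 4 * e0 * (s0 - p t)) / 2)) ^ 2
        = (u t) ^ 2 := by rw [hudef]
      _ ≤ (lam * εLT) ^ 2 := h3
      _ = lam ^ 2 * εLT ^ 2 := by ring
  exact Filter.limsup_le_of_le
    (Filter.isCoboundedUnder_le_of_eventually_le Filter.atTop
      (Filter.Eventually.of_forall (fun t => sq_nonneg _)))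
    hev
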